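/- The function x ↦ (1 − x²)·sec(πx/2) is monotonically increasing on the interval [0, 1), and strictly increasing on (0, 1), where sec denotes the secant function 1/cos. -/

import Mathlib

open Real

private noncomputable def Gfun : ℝ → ℝ := fun t => (π ^ 2 - 4 * t ^ 2) * Real.sin t - 8 * t * Real.cos t

private lemma G_hasDeriv (t : ℝ) :
    HasDerivAt Gfun ((π ^ 2 - 8 - 4 * t ^ 2) * Real.cos t) t := by
  have h1 : HasDerivAt (fun t : ℝ => (π ^ 2 - 4 * t ^ 2) * Real.sin t)
      ((-(4 * (2 * t))) * Real.sin t + (π ^ 2 - 4 * t ^ 2) * Real.cos t) t := by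
    have ha : HasDerivAt (fun t : ℝ => π ^ 2 - 4 * t ^ 2) (-(4 * (2 * t))) t := by
      simpa using ((hasDerivAt_pow 2 t).const_mul 4).const_sub (π ^ 2)
    exact ha.mul (Real.hasDerivAt_sin t)
  have h2 : HasDerivAt (fun t : ℝ => 8 * t * Real.cos t)
      (8 * Real.cos t + 8 * t * (-Real.sin t)) t := by
    have hb : HasDerivAt (fun t : ℝ => 8 * t) 8 t := by
      simpa using (hasDerivAt_id t).const_mul 8
    exact hb.mul (Real.hasDerivAt_cos t)
  have := h1.fun_sub h2
  exact this.congr_deriv (by ring)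

private lemma G_pos {t : ℝ} (ht : t ∈ Set.Ioo 0 (π / 2)) : 0 < Gfun t := by
  have hpi : (3 : ℝ) < π := Real.pi_gt_three
  have hpi8 : (8 : ℝ) < π ^ 2 := by nlinarith
  set a : ℝ := Real.sqrt (π ^ 2 - 8) / 2 with ha_def
  have ha2 : (Real.sqrt (π ^ 2 - 8)) ^ 2 = π ^ 2 - 8 := Real.sq_sqrt (by linarith)
  have ha_pos : 0 < a := by
    have : 0 < Real.sqrt (π ^ 2 - 8) := Real.sqrt_pos.mpr (by linarith)
    positivity
  have ha_lt : a < π / 2 := by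
    have h1 : Real.sqrt (π ^ 2 - 8) < π := by
      nlinarith [Real.sqrt_nonneg (π ^ 2 - 8)]
    simpa [ha_def] using (div_lt_div_of_pos_right h1 (by norm_num : (0:ℝ) < 2))
  have hGcont : Continuous Gfun := by
    unfold Gfun; continuity
  have hG0 : Gfun 0 = 0 := by simp [Gfun]
  have hGpi2 : Gfun (π / 2) = 0 := by
    simp [Gfun, Real.cos_pi_div_two, Real.sin_pi_div_two]
    ring
  -- G strictly increasing on [0, a]
  have hmono : StrictMonoOn Gfun (Set.Icc 0 a) := by
    apply strictMonoOn_of_deriv_pos (convex_Icc 0 a) hGcont.continuousOn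
    intro x hx
    rw [interior_Icc] at hx
    rw [(G_hasDeriv x).deriv]
    have hx1 : 0 < x := hx.1
    have hx2 : x < a := hx.2
    have hcos : 0 < Real.cos x := Real.cos_pos_of_mem_Ioo ⟨by linarith [Real.pi_pos], by linarith⟩
    have h4 : 4 * x ^ 2 < π ^ 2 - 8 := by
      have : x ^ 2 < a ^ 2 := by nlinarith
      have ha2' : a ^ 2 = (π ^ 2 - 8) / 4 := by
        rw [ha_def]; rw [div_pow, ha2]; norm_num
      nlinarith
    have : 0 < π ^ 2 - 8 - 4 * x ^ 2 := by linarith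
    positivity
  -- G strictly decreasing on [a, π/2]
  have hanti : StrictAntiOn Gfun (Set.Icc a (π / 2)) := by
    apply strictAntiOn_of_deriv_neg (convex_Icc a (π / 2)) hGcont.continuousOn
    intro x hx
    rw [interior_Icc] at hx
    rw [(G_hasDeriv x).deriv]
    have hx1 : a < x := hx.1
    have hx2 : x < π / 2 := hx.2
    have hcos : 0 < Real.cos x := Real.cos_pos_of_mem_Ioo ⟨by linarith [Real.pi_pos], hx2⟩
    have h4 : π ^ 2 - 8 < 4 * x ^ 2 := by
      have : a ^ 2 < x ^ 2 := by nlinarith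
      have ha2' : a ^ 2 = (π ^ 2 - 8) / 4 := by
        rw [ha_def]; rw [div_pow, ha2]; norm_num
      nlinarith
    have hneg : π ^ 2 - 8 - 4 * x ^ 2 < 0 := by linarith
    exact mul_neg_of_neg_of_pos hneg hcos
  rcases le_or_gt t a with h | h
  · have := hmono (Set.mem_Icc.mpr ⟨le_refl 0, le_of_lt ha_pos⟩)
      (Set.mem_Icc.mpr ⟨le_of_lt ht.1, h⟩) ht.1
    rwa [hG0] at this
  · have := hanti (Set.mem_Icc.mpr ⟨le_of_lt h, le_of_lt ht.2⟩)
      (Set.mem_Icc.mpr ⟨le_of_lt ha_lt, le_refl _⟩) ht.2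
    rwa [hGpi2] at this

theorem sec_monotone :
    MonotoneOn (fun x : ℝ => (1 - x ^ 2) * (1 / Real.cos (π * x / 2))) (Set.Ico 0 1) ∧
    StrictMonoOn (fun x : ℝ => (1 - x ^ 2) * (1 / Real.cos (π * x / 2))) (Set.Ioo 0 1) := by
  have hpi : 0 < π := Real.pi_pos
  have key : StrictMonoOn (fun x : ℝ => (1 - x ^ 2) * (1 / Real.cos (π * x / 2))) (Set.Ico 0 1) := by
    apply strictMonoOn_of_deriv_pos (convex_Ico 0 1)
    · apply ContinuousOn.mul (by fun_prop)
      apply ContinuousOn.div continuousOn_const (by fun_prop)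
      intro x hx
      rcases hx with ⟨hx0, hx1⟩
      have : 0 < Real.cos (π * x / 2) := by
        apply Real.cos_pos_of_mem_Ioo
        constructor
        · nlinarith
        · nlinarith
      exact ne_of_gt this
    · intro x hx
      rw [interior_Ico] at hx
      obtain ⟨hx0, hx1⟩ := hx
      set t : ℝ := π * x / 2 with ht_def
      have ht0 : 0 < t := by rw [ht_def]; positivity
      have htlt : t < π / 2 := by rw [ht_def]; nlinarith
      have hcos : 0 < Real.cos t := Real.cos_pos_of_mem_Ioo ⟨by linarith, htlt⟩
      have hderiv : HasDerivAt (fun x : ℝ => (1 - x ^ 2) * (1 / Real.cos (π * x / 2)))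
          ((π ^ 2 * (1 - x ^ 2) * Real.sin t - 4 * π * x * Real.cos t) /
            (2 * π * Real.cos t ^ 2)) x := by
        have h1 : HasDerivAt (fun x : ℝ => 1 - x ^ 2) (-(2 * x)) x := by
          simpa using (hasDerivAt_pow 2 x).const_sub 1
        have h2 : HasDerivAt (fun x : ℝ => π * x / 2) (π / 2) x := by
          simpa using ((hasDerivAt_id x).const_mul π).div_const 2
        have h3 : HasDerivAt (fun x : ℝ => Real.cos (π * x / 2))
            (-Real.sin t * (π / 2)) x := by
          simpa [ht_def, Function.comp_def] using (Real.hasDerivAt_cos (π * x / 2)).comp x h2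
        have h4 : HasDerivAt (fun x : ℝ => (Real.cos (π * x / 2))⁻¹)
            (-(-Real.sin t * (π / 2)) / Real.cos t ^ 2) x := by
          simpa [ht_def, Pi.inv_def] using h3.inv (ne_of_gt hcos)
        have h5 := h1.fun_mul h4
        have := h5
        simp only [one_div]
        have hc2 : Real.cos t ^ 2 ≠ 0 := by positivity
        refine this.congr_deriv ?_
        rw [← ht_def]
        field_simp
        ring
      rw [hderiv.deriv]
      apply div_pos
      · have hG := G_pos ⟨ht0, htlt⟩
        have hGval : Gfun t = (π ^ 2 - 4 * t ^ 2) * Real.sin t - 8 * t * Real.cos t := rfl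
        rw [hGval] at hG
        simp only [ht_def] at hG ⊢
        linear_combination hG
      · positivity
  constructor
  · exact key.monotoneOn
  · exact key.mono (Set.Ioo_subset_Ico_self)
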